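/- A commutative ring R is zip if and only if its classical ring of quotients Q_cl(R) is zip. -/

import Mathlib

/-- A commutative ring is *zip* if every ideal with zero annihilator contains a
finitely generated subideal with zero annihilator. -/
def IsZipRing (R : Type*) [CommRing R] : Prop :=
  ∀ I : Ideal R, Submodule.annihilator I = ⊥ →
    ∃ I₀ : Ideal R, I₀ ≤ I ∧ I₀.FG ∧ Submodule.annihilator I₀ = ⊥

/-- R is zip iff Q_cl(R) is zip. -/
theorem isZipRing_iff_isZipRing_fractionRing (R : Type*) [CommRing R] :
    IsZipRing R ↔ IsZipRing (FractionRing R) := by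
  set Q := FractionRing R
  let f := algebraMap R Q
  have hinj : Function.Injective f := IsFractionRing.injective R Q
  have hunit : ∀ s : nonZeroDivisors R, IsUnit (f s) :=
    fun s => IsLocalization.map_units Q s
  classical
  constructor
  · intro hR J hJ
    -- I = preimage of J
    set I : Ideal R := J.comap f with hI
    have hannI : Submodule.annihilator I = ⊥ := by
      rw [eq_bot_iff]
      intro r hr
      rw [Submodule.mem_annihilator] at hr
      have : f r ∈ Submodule.annihilator J := by
        rw [Submodule.mem_annihilator]
        intro q hq
        obtain ⟨⟨a, s⟩, h⟩ := IsLocalization.surj (nonZeroDivisors R) q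
        have ha : a ∈ I := by
          simp only [hI, Ideal.mem_comap]
          rw [← h]
          exact J.mul_mem_right _ hq
        have hra : r * a = 0 := by simpa using hr a ha
        have h0 : f r * (q * f s) = 0 := by
          rw [h, ← map_mul, hra, map_zero]
        have : f s * (f r * q) = 0 := by linear_combination h0
        have := (hunit s).mul_right_eq_zero.mp this
        simpa [smul_eq_mul] using this
      have : f r = 0 := by rwa [hJ, Submodule.mem_bot] at this
      simpa using hinj (by simpa using this)
    obtain ⟨I₀, hle, hfg, hann⟩ := hR I hannI
    refine ⟨I₀.map f, ?_, Ideal.FG.map hfg f, ?_⟩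
    · rw [Ideal.map_le_iff_le_comap]; exact hle
    · rw [eq_bot_iff]
      intro q hq
      rw [Submodule.mem_annihilator] at hq
      obtain ⟨⟨a, s⟩, h⟩ := IsLocalization.surj (nonZeroDivisors R) q
      have ha : a ∈ Submodule.annihilator I₀ := by
        rw [Submodule.mem_annihilator]
        intro i hi
        have : f a * f i = 0 := by
          rw [← h]
          have := hq (f i) (Ideal.mem_map_of_mem f hi)
          rw [smul_eq_mul] at this
          linear_combination f s * this
        rw [← map_mul] at this
        exact hinj (by simpa using this)
      rw [hann, Submodule.mem_bot] at ha
      subst ha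
      have : q * f s = 0 := by simpa using h
      have := (hunit s).mul_left_eq_zero.mp (by rwa [mul_comm] at this)
      simpa using this
  · intro hQ I hI
    set J : Ideal Q := I.map f with hJ
    have hannJ : Submodule.annihilator J = ⊥ := by
      rw [eq_bot_iff]
      intro q hq
      rw [Submodule.mem_annihilator] at hq
      obtain ⟨⟨a, s⟩, h⟩ := IsLocalization.surj (nonZeroDivisors R) q
      have ha : a ∈ Submodule.annihilator I := by
        rw [Submodule.mem_annihilator]
        intro i hi
        have : f a * f i = 0 := by
          rw [← h]
          have := hq (f i) (Ideal.mem_map_of_mem f hi)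
          rw [smul_eq_mul] at this
          linear_combination f s * this
        rw [← map_mul] at this
        exact hinj (by simpa using this)
      rw [hI, Submodule.mem_bot] at ha
      subst ha
      have : q * f s = 0 := by simpa using h
      have := (hunit s).mul_left_eq_zero.mp this
      simpa using this
    obtain ⟨J₀, hle, ⟨T, hT⟩, hann⟩ := hQ J hannJ
    -- for each generator q ∈ T, pick a ∈ I, s with q * f s = f a
    have choice : ∀ q ∈ T, ∃ (a : R) (s : nonZeroDivisors R),
        a ∈ I ∧ q * f s = f a := by
      intro q hqT
      have hqJ : q ∈ J := hle (hT ▸ Ideal.subset_span hqT)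
      rw [hJ, IsLocalization.mem_map_algebraMap_iff (nonZeroDivisors R)] at hqJ
      obtain ⟨⟨x, s⟩, hx⟩ := hqJ
      exact ⟨x, s, x.2, hx⟩
    choose! a s haI hqa using choice
    refine ⟨Ideal.span (T.image a), ?_, ⟨T.image a, rfl⟩, ?_⟩
    · rw [Ideal.span_le]
      intro x hx
      simp only [Finset.coe_image, Set.mem_image, Finset.mem_coe] at hx
      obtain ⟨q, hq, rfl⟩ := hx
      exact haI q hq
    · rw [eq_bot_iff]
      intro r hr
      have hr' := (Submodule.mem_annihilator_span (↑(T.image a) : Set R) r).mp hr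
      have : f r ∈ Submodule.annihilator J₀ := by
        rw [← hT]
        refine (Submodule.mem_annihilator_span (↑T : Set Q) (f r)).mpr ?_
        rintro ⟨q, hq⟩
        have h1 : r * a q = 0 := by
          have := hr' ⟨a q, by simpa using Finset.mem_image_of_mem a hq⟩
          simpa using this
        have h2 : f r * (q * f (s q)) = 0 := by
          rw [hqa q hq, ← map_mul, h1, map_zero]
        have h3 : f (s q) * (f r * q) = 0 := by linear_combination h2
        have := (hunit (s q)).mul_right_eq_zero.mp h3
        simpa [smul_eq_mul] using this
      rw [hann, Submodule.mem_bot] at this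
      have : r = 0 := hinj (by simpa using this)
      simpa using this
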